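/- arXiv:2306.04110 — 2 statements merged into one kernel-verified Lean document; each statement's English description precedes it below -/
import Mathlib

section
/- For all integers n ≥ 2 and k ≥ 1, f(P_{2n+1}^k) = 1, where f(G) = min{Δ(G[S]) : S ⊆ V(G), |S| = α(G)+1}. -/
open Finset

/-- The path graph on vertex set `{1,…,m}`, realized on `Fin m`
(vertex `i : Fin m` stands for label `i+1`); label `i` is adjacent to label `i+1`. -/
def pathGraph' (m : ℕ) : SimpleGraph (Fin m) where
  Adj i j := (i : ℕ) + 1 = (j : ℕ) ∨ (j : ℕ) + 1 = (i : ℕ)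
  symm := by constructor; intro i j h; tauto
  loopless := by constructor; intro i h; omega

/-- The Cartesian (box) product of `k` copies of the path `P_m`:
two vertices are adjacent iff they differ in exactly one coordinate, and
in that coordinate they are adjacent in the path. -/
def boxPower (m k : ℕ) : SimpleGraph (Fin k → Fin m) where
  Adj u v := ∃ i, (pathGraph' m).Adj (u i) (v i) ∧ ∀ j, j ≠ i → u j = v j
  symm := by
    constructor
    rintro u v ⟨i, hadj, h⟩
    exact ⟨i, (pathGraph' m).adj_symm hadj, fun j hj => (h j hj).symm⟩
  loopless := by
    constructor
    rintro u ⟨i, hadj, -⟩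
    exact (pathGraph' m).irrefl hadj

/-- A finite set of vertices is independent if its vertices are pairwise nonadjacent. -/
def IsIndepFinset {V : Type*} (G : SimpleGraph V) (S : Finset V) : Prop :=
  ∀ u ∈ S, ∀ v ∈ S, ¬ G.Adj u v

/-- The independence number `α(G)` of a finite graph. -/
noncomputable def indepNum {V : Type*} [Fintype V] (G : SimpleGraph V) : ℕ :=
  sSup {n | ∃ S : Finset V, IsIndepFinset G S ∧ S.card = n}

open scoped Classical in
/-- The maximum degree `Δ(G[S])` of the subgraph of `G` induced on `S`. -/
noncomputable def maxDegOn {V : Type*} (G : SimpleGraph V) (S : Finset V) : ℕ :=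
  S.sup fun v => (S.filter fun u => G.Adj v u).card

/-- `f(G)`: the minimum, over vertex subsets `S` of size `α(G)+1`, of the maximum
degree of the induced subgraph `G[S]`. -/
noncomputable def minMaxDeg {V : Type*} [Fintype V] (G : SimpleGraph V) : ℕ :=
  sInf {d | ∃ S : Finset V, S.card = indepNum G + 1 ∧ maxDegOn G S = d}

namespace AuxOdd

def pbit (c : ℕ) : ℕ := if c < 6 then (if c % 3 = 2 then 1 else 0) else c % 2

lemma pbit_no_triple (a : ℕ) : ¬ (pbit a = pbit (a+1) ∧ pbit (a+1) = pbit (a+2)) := by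
  rintro ⟨h1, h2⟩
  unfold pbit at h1 h2
  split_ifs at h1 h2 <;> omega

lemma pbit_eq_mod {c : ℕ} (h1 : c ≠ 1) (h2 : c ≠ 2) (h3 : c ≠ 3) : pbit c = c % 2 := by
  unfold pbit; split_ifs <;> omega


def bflip (n : ℕ) (a : Fin (2*n+1)) : Fin (2*n+1) :=
  if (a : ℕ) % 2 = 0 then ⟨min ((a:ℕ)+1) (2*n), by omega⟩
  else ⟨(a:ℕ)-1, by have := a.isLt; omega⟩

variable {n k : ℕ}

lemma bflip_val (a : Fin (2*n+1)) (h : (a:ℕ) ≠ 2*n) :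
    ((bflip n a : ℕ)) = if (a:ℕ) % 2 = 0 then (a:ℕ)+1 else (a:ℕ)-1 := by
  have := a.isLt
  unfold bflip; split_ifs <;> simp <;> omega

lemma bflip_ne (a : Fin (2*n+1)) (h : (a:ℕ) ≠ 2*n) : ((bflip n a : ℕ)) ≠ 2*n := by
  have := a.isLt; have h2 := bflip_val a h; split_ifs at h2 <;> omega

lemma bflip_parity (a : Fin (2*n+1)) (h : (a:ℕ) ≠ 2*n) :
    ((bflip n a : ℕ)) % 2 ≠ (a:ℕ) % 2 := by
  have := a.isLt; have h2 := bflip_val a h; split_ifs at h2 <;> omega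

lemma bflip_adj (a : Fin (2*n+1)) (h : (a:ℕ) ≠ 2*n) :
    ((bflip n a : ℕ)) = (a:ℕ) + 1 ∨ ((bflip n a : ℕ)) + 1 = (a:ℕ) := by
  have := a.isLt; have h2 := bflip_val a h; split_ifs at h2 <;> omega

lemma bflip_bflip (a : Fin (2*n+1)) (h : (a:ℕ) ≠ 2*n) :
    bflip n (bflip n a) = a := by
  have := a.isLt
  apply Fin.ext
  rw [bflip_val _ (bflip_ne a h), bflip_val a h]
  have h2 := bflip_val a h
  split_ifs at h2 ⊢ <;> omega

/-- the set of coordinates in `T` where `x` is not at the top value `2n` -/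
def fset (T : Finset (Fin k)) (x : Fin k → Fin (2*n+1)) : Finset (Fin k) :=
  T.filter fun i => (x i : ℕ) ≠ 2*n

/-- flip the lowest non-top coordinate (within `T`) of `x` -/
def phi (T : Finset (Fin k)) (x : Fin k → Fin (2*n+1)) : Fin k → Fin (2*n+1) :=
  if h : (fset T x).Nonempty then
    Function.update x ((fset T x).min' h) (bflip n (x ((fset T x).min' h)))
  else x

lemma phi_def (T : Finset (Fin k)) (x : Fin k → Fin (2*n+1)) (h : (fset T x).Nonempty) :
    phi T x = Function.update x ((fset T x).min' h) (bflip n (x ((fset T x).min' h))) := by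
  unfold phi; rw [dif_pos h]

lemma min'_mem_fset (T : Finset (Fin k)) (x : Fin k → Fin (2*n+1)) (h : (fset T x).Nonempty) :
    (fset T x).min' h ∈ T ∧ (x ((fset T x).min' h) : ℕ) ≠ 2*n := by
  have := (fset T x).min'_mem h
  unfold fset at this
  exact Finset.mem_filter.mp this

lemma phi_apply_ne (T : Finset (Fin k)) (x : Fin k → Fin (2*n+1)) (h : (fset T x).Nonempty)
    {j : Fin k} (hj : j ≠ (fset T x).min' h) : phi T x j = x j := by
  rw [phi_def T x h, Function.update_of_ne hj]

lemma phi_apply_min (T : Finset (Fin k)) (x : Fin k → Fin (2*n+1)) (h : (fset T x).Nonempty) :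
    phi T x ((fset T x).min' h) = bflip n (x ((fset T x).min' h)) := by
  rw [phi_def T x h, Function.update_self]

lemma fset_phi (T : Finset (Fin k)) (x : Fin k → Fin (2*n+1)) (h : (fset T x).Nonempty) :
    fset T (phi T x) = fset T x := by
  ext j
  unfold fset
  simp only [Finset.mem_filter, and_congr_right_iff]
  intro hjT
  by_cases hj : j = (fset T x).min' h
  · subst hj
    rw [phi_apply_min T x h]
    have hm := min'_mem_fset T x h
    constructor
    · intro _; exact hm.2
    · intro _; exact bflip_ne _ hm.2
  · rw [phi_apply_ne T x h hj]

lemma phi_invol (T : Finset (Fin k)) (x : Fin k → Fin (2*n+1)) (h : (fset T x).Nonempty) :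
    phi T (phi T x) = x := by
  have hne : (fset T (phi T x)).Nonempty := by rw [fset_phi T x h]; exact h
  have hmin : (fset T (phi T x)).min' hne = (fset T x).min' h := by
    congr 1; exact fset_phi T x h
  funext j
  by_cases hj : j = (fset T x).min' h
  · subst hj
    rw [phi_def T (phi T x) hne]
    rw [hmin, Function.update_self, phi_apply_min T x h]
    exact bflip_bflip _ (min'_mem_fset T x h).2
  · rw [phi_apply_ne T (phi T x) hne (by rw [hmin]; exact hj), phi_apply_ne T x h hj]


lemma sum_update (s : Finset (Fin k)) (x : Fin k → Fin (2*n+1)) {i₀ : Fin k} (hi : i₀ ∈ s)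
    (b : Fin (2*n+1)) :
    (∑ i ∈ s, ((Function.update x i₀ b i : Fin (2*n+1)) : ℕ)) + (x i₀ : ℕ)
      = (∑ i ∈ s, ((x i : ℕ))) + (b : ℕ) := by
  rw [← Finset.sum_erase_add s _ hi, ← Finset.sum_erase_add s (fun i => ((x i : ℕ))) hi]
  have h1 : ∑ i ∈ s.erase i₀, ((Function.update x i₀ b i : Fin (2*n+1)) : ℕ)
      = ∑ i ∈ s.erase i₀, ((x i : ℕ)) := by
    apply Finset.sum_congr rfl
    intro j hj
    rw [Function.update_of_ne (Finset.ne_of_mem_erase hj)]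
  rw [h1, Function.update_self]
  omega

/-- parity of the sum over `s` flips under `phi T` when the flipped index lies in `s` -/
lemma phi_sum_parity (T : Finset (Fin k)) (x : Fin k → Fin (2*n+1)) (h : (fset T x).Nonempty)
    (s : Finset (Fin k)) (hs : T ⊆ s) :
    (∑ i ∈ s, ((phi T x i : ℕ))) % 2 ≠ (∑ i ∈ s, ((x i : ℕ))) % 2 := by
  have hm := min'_mem_fset T x h
  have hi : (fset T x).min' h ∈ s := hs hm.1
  have := sum_update s x hi (bflip n (x ((fset T x).min' h)))
  rw [← phi_def T x h] at this
  have hp := bflip_parity _ hm.2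
  omega

/-- if `phi` has nothing to flip, all coordinates in `T` are at the top -/
lemma fset_empty_iff (T : Finset (Fin k)) (x : Fin k → Fin (2*n+1)) :
    ¬ (fset T x).Nonempty ↔ ∀ i ∈ T, (x i : ℕ) = 2*n := by
  unfold fset
  simp [Finset.filter_nonempty_iff]


/-- sum of the coordinates away from `z` -/
def restSum (z : Fin k) (x : Fin k → Fin (2*n+1)) : ℕ :=
  ∑ i ∈ (univ : Finset (Fin k)).erase z, ((x i : ℕ))

def layer (z : Fin k) (c : Fin (2*n+1)) (b : ℕ) : Finset (Fin k → Fin (2*n+1)) :=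
  univ.filter fun x => x z = c ∧ restSum z x % 2 = b

lemma restSum_top (z : Fin k) (x : Fin k → Fin (2*n+1))
    (hx : ∀ i ∈ (univ : Finset (Fin k)).erase z, (x i : ℕ) = 2*n) :
    restSum z x % 2 = 0 := by
  unfold restSum
  rw [Finset.sum_congr rfl hx, Finset.sum_const, smul_eq_mul]
  have : ((univ : Finset (Fin k)).erase z).card * (2*n)
      = 2 * (((univ : Finset (Fin k)).erase z).card * n) := by ring
  omega

lemma layer_count (z : Fin k) (c : Fin (2*n+1)) :
    (layer z c 0).card = (layer z c 1).card + 1 := by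
  classical
  set T : Finset (Fin k) := (univ : Finset (Fin k)).erase z with hT
  set wc : Fin k → Fin (2*n+1) := fun i => if i = z then c else ⟨2*n, by omega⟩ with hwc
  have hwcz : wc z = c := by simp [hwc]
  have hwcT : ∀ i ∈ T, (wc i : ℕ) = 2*n := by
    intro i hi
    have : i ≠ z := Finset.ne_of_mem_erase hi
    simp [hwc, this]
  have hwc0 : wc ∈ layer z c 0 := by
    unfold layer
    simp only [Finset.mem_filter, Finset.mem_univ, true_and]
    exact ⟨hwcz, restSum_top z wc hwcT⟩
  -- nonemptiness of fset for members of layers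
  have hne1 : ∀ x ∈ layer z c 1, (fset T x).Nonempty := by
    intro x hx
    by_contra hc
    have := (fset_empty_iff T x).mp hc
    have h0 := restSum_top z x this
    unfold layer at hx
    simp only [Finset.mem_filter] at hx
    omega
  have hne0 : ∀ y ∈ (layer z c 0).erase wc, (fset T y).Nonempty := by
    intro y hy
    by_contra hc
    have hall := (fset_empty_iff T y).mp hc
    have hyw : y ≠ wc := Finset.ne_of_mem_erase hy
    have hy0 : y ∈ layer z c 0 := Finset.mem_of_mem_erase hy
    unfold layer at hy0
    simp only [Finset.mem_filter] at hy0
    apply hyw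
    funext i
    by_cases hi : i = z
    · subst hi; rw [hy0.2.1, hwcz]
    · have hiT : i ∈ T := by rw [hT]; exact Finset.mem_erase.mpr ⟨hi, Finset.mem_univ i⟩
      apply Fin.ext
      rw [hall i hiT, hwcT i hiT]
  -- membership lemmas for phi
  have hmemz : ∀ (x : Fin k → Fin (2*n+1)), (h : (fset T x).Nonempty) → phi T x z = x z := by
    intro x h
    apply phi_apply_ne T x h
    intro hzm
    have := (min'_mem_fset T x h).1
    rw [← hzm, hT] at this
    exact (Finset.mem_erase.mp this).1 rfl
  have hparity : ∀ (x : Fin k → Fin (2*n+1)), (h : (fset T x).Nonempty) →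
      restSum z (phi T x) % 2 ≠ restSum z x % 2 := by
    intro x h
    exact phi_sum_parity T x h T (le_refl T)
  have hnewc : ∀ (x : Fin k → Fin (2*n+1)), (h : (fset T x).Nonempty) → phi T x ≠ wc := by
    intro x h heq
    have hm := min'_mem_fset T x h
    have h1 : (phi T x ((fset T x).min' h) : ℕ) ≠ 2*n := by
      rw [phi_apply_min T x h]; exact bflip_ne _ hm.2
    apply h1
    rw [heq]
    exact hwcT _ hm.1
  rw [← Finset.card_erase_add_one hwc0]
  congr 1
  symm
  apply Finset.card_bij' (fun x _ => phi T x) (fun y _ => phi T y)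
  · intro x hx
    have h := hne1 x hx
    unfold layer at hx ⊢
    simp only [Finset.mem_filter, Finset.mem_univ, true_and] at hx
    rw [Finset.mem_erase]
    refine ⟨hnewc x h, ?_⟩
    simp only [Finset.mem_filter, Finset.mem_univ, true_and]
    refine ⟨by rw [hmemz x h]; exact hx.1, ?_⟩
    have := hparity x h
    omega
  · intro y hy
    have h := hne0 y hy
    have hy0 := Finset.mem_of_mem_erase hy
    unfold layer at hy0 ⊢
    simp only [Finset.mem_filter, Finset.mem_univ, true_and] at hy0
    simp only [Finset.mem_filter, Finset.mem_univ, true_and]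
    refine ⟨by rw [hmemz y h]; exact hy0.1, ?_⟩
    have := hparity y h
    omega
  · intro x hx
    exact phi_invol T x (hne1 x hx)
  · intro y hy
    exact phi_invol T y (hne0 y hy)


lemma boxPower_adj {m k : ℕ} {u v : Fin k → Fin m} :
    (boxPower m k).Adj u v ↔
      ∃ i, (((u i : ℕ) + 1 = (v i : ℕ)) ∨ ((v i : ℕ) + 1 = (u i : ℕ))) ∧
        ∀ j, j ≠ i → u j = v j := Iff.rfl

variable {n k : ℕ}

/-- the even-total-sum vertex set -/
def Eset (n k : ℕ) : Finset (Fin k → Fin (2*n+1)) :=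
  univ.filter fun x => (∑ i, ((x i : ℕ))) % 2 = 0

lemma totalSum_top (x : Fin k → Fin (2*n+1))
    (hx : ∀ i ∈ (univ : Finset (Fin k)), (x i : ℕ) = 2*n) :
    (∑ i, ((x i : ℕ))) % 2 = 0 := by
  rw [Finset.sum_congr rfl hx, Finset.sum_const, smul_eq_mul]
  have : ((univ : Finset (Fin k)).card) * (2*n)
      = 2 * (((univ : Finset (Fin k)).card) * n) := by ring
  omega

lemma update_eq_of_adj {u v : Fin k → Fin (2*n+1)} {i : Fin k}
    (hoth : ∀ j, j ≠ i → u j = v j) : u = Function.update v i (u i) := by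
  funext j
  by_cases hj : j = i
  · subst hj; rw [Function.update_self]
  · rw [Function.update_of_ne hj]; exact hoth j hj

lemma sum_parity_adj {u v : Fin k → Fin (2*n+1)} (h : (boxPower (2*n+1) k).Adj u v)
    : (∑ i, ((u i : ℕ))) % 2 ≠ (∑ i, ((v i : ℕ))) % 2 := by
  obtain ⟨i, hpa, hoth⟩ := boxPower_adj.mp h
  have hu : u = Function.update v i (u i) := update_eq_of_adj hoth
  have hs := sum_update (univ : Finset (Fin k)) v (Finset.mem_univ i) (u i)
  rw [← hu] at hs
  omega

lemma Eset_indep : IsIndepFinset (boxPower (2*n+1) k) (Eset n k) := by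
  intro u hu v hv hadj
  unfold Eset at hu hv
  simp only [Finset.mem_filter] at hu hv
  exact sum_parity_adj hadj (by omega)

lemma odd_fset_nonempty (x : Fin k → Fin (2*n+1))
    (hx : (∑ i, ((x i : ℕ))) % 2 ≠ 0) : (fset (univ : Finset (Fin k)) x).Nonempty := by
  by_contra hc
  exact hx (totalSum_top x ((fset_empty_iff _ x).mp hc))

lemma phi_adj (x : Fin k → Fin (2*n+1)) (h : (fset (univ : Finset (Fin k)) x).Nonempty) :
    (boxPower (2*n+1) k).Adj x (phi univ x) := by
  rw [boxPower_adj]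
  refine ⟨(fset (univ : Finset (Fin k)) x).min' h, ?_, ?_⟩
  · rw [phi_apply_min _ x h]
    have hm := (min'_mem_fset _ x h).2
    have := bflip_adj _ hm
    omega
  · intro j hj
    exact (phi_apply_ne _ x h hj).symm

lemma indep_card_le (S : Finset (Fin k → Fin (2*n+1)))
    (hS : IsIndepFinset (boxPower (2*n+1) k) S) : S.card ≤ (Eset n k).card := by
  classical
  set f : (Fin k → Fin (2*n+1)) → (Fin k → Fin (2*n+1)) :=
    fun x => if (∑ i, ((x i : ℕ))) % 2 = 0 then x else phi univ x with hf
  apply Finset.card_le_card_of_injOn f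
  · intro x hx
    unfold Eset
    simp only [Finset.mem_coe, Finset.mem_filter, Finset.mem_univ, true_and]
    by_cases hpar : (∑ i, ((x i : ℕ))) % 2 = 0
    · rw [hf]; simp only [if_pos hpar]; exact hpar
    · rw [hf]; simp only [if_neg hpar]
      have hne := odd_fset_nonempty x hpar
      have := phi_sum_parity univ x hne univ (le_refl _)
      omega
  · intro x hx y hy hxy
    simp only [Finset.coe_mem, Finset.mem_coe] at hx hy
    rw [hf] at hxy
    simp only at hxy
    by_cases hx0 : (∑ i, ((x i : ℕ))) % 2 = 0 <;>
      by_cases hy0 : (∑ i, ((y i : ℕ))) % 2 = 0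
    · rwa [if_pos hx0, if_pos hy0] at hxy
    · rw [if_pos hx0, if_neg hy0] at hxy
      exfalso
      have hne := odd_fset_nonempty y hy0
      have hadj := phi_adj y hne
      rw [← hxy] at hadj
      exact hS y hy x hx hadj
    · rw [if_neg hx0, if_pos hy0] at hxy
      exfalso
      have hne := odd_fset_nonempty x hx0
      have hadj := phi_adj x hne
      rw [hxy] at hadj
      exact hS x hx y hy hadj
    · rw [if_neg hx0, if_neg hy0] at hxy
      have hnex := odd_fset_nonempty x hx0
      have hney := odd_fset_nonempty y hy0
      have := phi_invol univ x hnex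
      rw [hxy, phi_invol univ y hney] at this
      exact this.symm

lemma bddAbove_indep : BddAbove {j | ∃ S : Finset (Fin k → Fin (2*n+1)),
    IsIndepFinset (boxPower (2*n+1) k) S ∧ S.card = j} := by
  refine ⟨Fintype.card (Fin k → Fin (2*n+1)), ?_⟩
  rintro j ⟨S, -, rfl⟩
  simpa using S.card_le_univ

lemma indepNum_eq : indepNum (boxPower (2*n+1) k) = (Eset n k).card := by
  apply le_antisymm
  · apply csSup_le
    · exact ⟨0, ∅, by intro u hu; simp at hu, rfl⟩
    · rintro j ⟨S, hS, rfl⟩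
      exact indep_card_le S hS
  · exact le_csSup bddAbove_indep ⟨Eset n k, Eset_indep, rfl⟩

/-- the near-independent set witnessing `f = 1` -/
def Sstar (n : ℕ) {k : ℕ} (z : Fin k) : Finset (Fin k → Fin (2*n+1)) :=
  univ.filter fun x => restSum z x % 2 = pbit ((x z : ℕ))

lemma Eset_eq_rest (z : Fin k) :
    Eset n k = univ.filter fun x => restSum z x % 2 = ((x z : ℕ)) % 2 := by
  ext x
  unfold Eset restSum
  simp only [Finset.mem_filter, Finset.mem_univ, true_and]
  have h0 : (∑ i ∈ (univ : Finset (Fin k)).erase z, ((x i : ℕ))) + ((x z : ℕ))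
      = ∑ i, ((x i : ℕ)) := Finset.sum_erase_add _ _ (Finset.mem_univ z)
  constructor <;> intro h <;> omega

lemma card_filter_fun (g : ℕ → ℕ) (z : Fin k) :
    (univ.filter fun x : Fin k → Fin (2*n+1) => restSum z x % 2 = g ((x z : ℕ))).card
      = ∑ c : Fin (2*n+1), (layer z c (g (c : ℕ))).card := by
  classical
  rw [Finset.card_eq_sum_card_fiberwise
    (f := fun x : Fin k → Fin (2*n+1) => x z) (t := univ) (fun x _ => Finset.mem_univ _)]
  apply Finset.sum_congr rfl
  intro c _
  congr 1
  ext x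
  unfold layer
  simp only [Finset.mem_filter, Finset.mem_univ, true_and]
  constructor
  · rintro ⟨h1, h2⟩
    refine ⟨h2, ?_⟩
    rw [← h2]; exact h1
  · rintro ⟨h1, h2⟩
    refine ⟨?_, h1⟩
    rw [h1]; exact h2

lemma two_lt (hn : 2 ≤ n) : (2:ℕ) < 2*n+1 := by omega
lemma one_lt (hn : 2 ≤ n) : (1:ℕ) < 2*n+1 := by omega
lemma three_lt (hn : 2 ≤ n) : (3:ℕ) < 2*n+1 := by omega

lemma Sstar_card (hn : 2 ≤ n) (z : Fin k) :
    (Sstar n z).card = (Eset n k).card + 1 := by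
  classical
  have h1 : (Sstar n z).card = ∑ c : Fin (2*n+1), (layer z c (pbit (c : ℕ))).card :=
    card_filter_fun pbit z
  have h2 : (Eset n k).card = ∑ c : Fin (2*n+1), (layer z c ((c : ℕ) % 2)).card := by
    rw [Eset_eq_rest z]; exact card_filter_fun (fun a => a % 2) z
  have key : ∀ c : Fin (2*n+1),
      (layer z c (pbit (c : ℕ))).card + (if (c : ℕ) = 2 then 1 else 0)
        = (layer z c ((c : ℕ) % 2)).card + (if (c : ℕ) = 1 ∨ (c : ℕ) = 3 then 1 else 0) := by
    intro c
    have hlc := layer_count z c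
    by_cases e1 : (c : ℕ) = 1
    · have hp : pbit ((c : ℕ)) = 0 := by rw [e1]; decide
      have hm : ((c : ℕ)) % 2 = 1 := by omega
      rw [hp, hm, if_neg (by omega), if_pos (by omega)]
      omega
    · by_cases e2 : (c : ℕ) = 2
      · have hp : pbit ((c : ℕ)) = 1 := by rw [e2]; decide
        have hm : ((c : ℕ)) % 2 = 0 := by omega
        rw [hp, hm, if_pos e2, if_neg (by omega)]
        omega
      · by_cases e3 : (c : ℕ) = 3
        · have hp : pbit ((c : ℕ)) = 0 := by rw [e3]; decide
          have hm : ((c : ℕ)) % 2 = 1 := by omega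
          rw [hp, hm, if_neg (by omega), if_pos (by omega)]
          omega
        · rw [pbit_eq_mod e1 e2 e3, if_neg (by omega), if_neg (by omega)]
  have hsum := Finset.sum_congr rfl (fun c (_ : c ∈ (univ : Finset (Fin (2*n+1)))) => key c)
  rw [Finset.sum_add_distrib, Finset.sum_add_distrib] at hsum
  have hc2 : (∑ c : Fin (2*n+1), (if (c : ℕ) = 2 then 1 else 0)) = 1 := by
    rw [Finset.sum_boole]
    have : (univ.filter fun c : Fin (2*n+1) => (c : ℕ) = 2) = {⟨2, two_lt hn⟩} := by
      ext c
      simp only [Finset.mem_filter, Finset.mem_univ, true_and, Finset.mem_singleton]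
      constructor
      · intro h; exact Fin.ext h
      · intro h; rw [h]
    rw [this]
    simp
  have hc13 : (∑ c : Fin (2*n+1), (if (c : ℕ) = 1 ∨ (c : ℕ) = 3 then 1 else 0)) = 2 := by
    rw [Finset.sum_boole]
    have : (univ.filter fun c : Fin (2*n+1) => (c : ℕ) = 1 ∨ (c : ℕ) = 3)
        = {⟨1, one_lt hn⟩, ⟨3, three_lt hn⟩} := by
      ext c
      simp only [Finset.mem_filter, Finset.mem_univ, true_and, Finset.mem_insert,
        Finset.mem_singleton]
      constructor
      · rintro (h | h)
        · exact Or.inl (Fin.ext h)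
        · exact Or.inr (Fin.ext h)
      · rintro (h | h) <;> rw [h]
        · exact Or.inl rfl
        · exact Or.inr rfl
    rw [this]
    rw [Finset.card_insert_of_notMem (by simp), Finset.card_singleton]
    norm_num
  rw [hc2, hc13] at hsum
  omega

lemma Sstar_neighbor (z : Fin k) {v u : Fin k → Fin (2*n+1)}
    (hv : v ∈ Sstar n z) (hu : u ∈ Sstar n z)
    (hadj : (boxPower (2*n+1) k).Adj v u) :
    (∀ j, j ≠ z → u j = v j) ∧ pbit ((u z : ℕ)) = pbit ((v z : ℕ)) ∧
      (((u z : ℕ)) = (v z : ℕ) + 1 ∨ ((u z : ℕ)) + 1 = (v z : ℕ)) := by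
  obtain ⟨i, hpa, hoth⟩ := boxPower_adj.mp hadj
  unfold Sstar at hv hu
  simp only [Finset.mem_filter, Finset.mem_univ, true_and] at hv hu
  have hiz : i = z := by
    by_contra hiz
    have hiT : i ∈ (univ : Finset (Fin k)).erase z :=
      Finset.mem_erase.mpr ⟨hiz, Finset.mem_univ i⟩
    have hvu : v = Function.update u i (v i) := update_eq_of_adj hoth
    have hs := sum_update ((univ : Finset (Fin k)).erase z) u hiT (v i)
    rw [← hvu] at hs
    unfold restSum at hv hu
    have huz : v z = u z := hoth z (fun h => hiz h.symm)
    rw [huz] at hv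
    omega
  rw [hiz] at hpa hoth
  have hrest : restSum z u = restSum z v := by
    unfold restSum
    apply Finset.sum_congr rfl
    intro j hj
    rw [(hoth j (Finset.ne_of_mem_erase hj))]
  refine ⟨fun j hj => (hoth j hj).symm, ?_, by omega⟩
  rw [← hu, ← hv, hrest]

lemma Sstar_maxdeg (hn : 2 ≤ n) (hk : 1 ≤ k) (z : Fin k) :
    maxDegOn (boxPower (2*n+1) k) (Sstar n z) = 1 := by
  classical
  apply le_antisymm
  · unfold maxDegOn
    apply Finset.sup_le
    intro v hv
    rw [Finset.card_le_one]
    intro u1 hu1 u2 hu2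
    rw [Finset.mem_filter] at hu1 hu2
    obtain ⟨h1m, h1a⟩ := hu1
    obtain ⟨h2m, h2a⟩ := hu2
    obtain ⟨ho1, hp1, hd1⟩ := Sstar_neighbor z hv h1m h1a
    obtain ⟨ho2, hp2, hd2⟩ := Sstar_neighbor z hv h2m h2a
    by_cases hz : u1 z = u2 z
    · funext j
      by_cases hj : j = z
      · subst hj; exact hz
      · rw [ho1 j hj, ho2 j hj]
    · exfalso
      have hvals : ((u1 z : ℕ)) ≠ ((u2 z : ℕ)) := fun h => hz (Fin.ext h)
      rcases hd1 with h1 | h1 <;> rcases hd2 with h2 | h2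
      · exact hvals (by omega)
      · apply pbit_no_triple ((u2 z : ℕ))
        constructor
        · rw [h2]; exact hp2
        · have e2 : ((u2 z : ℕ)) + 2 = ((v z : ℕ)) + 1 := by omega
          rw [h2, e2, ← h1]
          exact hp1.symm
      · apply pbit_no_triple ((u1 z : ℕ))
        constructor
        · rw [h1]; exact hp1
        · have e2 : ((u1 z : ℕ)) + 2 = ((v z : ℕ)) + 1 := by omega
          rw [h1, e2, ← h2]
          exact hp2.symm
      · exact hvals (by omega)
  · set v0 : Fin k → Fin (2*n+1) := fun _ => ⟨0, by omega⟩ with hv0def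
    set u0 : Fin k → Fin (2*n+1) := Function.update v0 z ⟨1, by omega⟩ with hu0def
    have hrv0 : restSum z v0 = 0 := by
      unfold restSum
      simp [hv0def]
    have hrv0' : restSum z u0 = 0 := by
      unfold restSum
      rw [← hrv0]
      unfold restSum
      apply Finset.sum_congr rfl
      intro j hj
      rw [hu0def, Function.update_of_ne (Finset.ne_of_mem_erase hj)]
    have hv0m : v0 ∈ Sstar n z := by
      unfold Sstar
      simp only [Finset.mem_filter, Finset.mem_univ, true_and]
      rw [hrv0]
      show (0:ℕ) % 2 = pbit 0
      decide
    have hu0m : u0 ∈ Sstar n z := by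
      unfold Sstar
      simp only [Finset.mem_filter, Finset.mem_univ, true_and]
      rw [hrv0']
      have h2 : ((u0 z : ℕ)) = 1 := by rw [hu0def, Function.update_self]
      rw [h2]
      decide
    have hadj : (boxPower (2*n+1) k).Adj v0 u0 := by
      rw [boxPower_adj]
      refine ⟨z, ?_, ?_⟩
      · left
        have h1 : ((v0 z : ℕ)) = 0 := rfl
        have h2 : ((u0 z : ℕ)) = 1 := by rw [hu0def, Function.update_self]
        omega
      · intro j hj
        rw [hu0def, Function.update_of_ne hj]
    unfold maxDegOn
    refine le_trans ?_ (Finset.le_sup hv0m)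
    exact Finset.card_pos.mpr ⟨u0, Finset.mem_filter.mpr ⟨hu0m, hadj⟩⟩

end AuxOdd

/-- For all integers `n ≥ 2` and `k ≥ 1`, `f(P_{2n+1}^k) = 1`. -/
theorem minMaxDeg_boxPower_odd (n k : ℕ) (hn : 2 ≤ n) (hk : 1 ≤ k) :
    minMaxDeg (boxPower (2 * n + 1) k) = 1 := by
  classical
  have hz : 0 < k := hk
  set z : Fin k := ⟨0, hz⟩ with hzdef
  have hα := AuxOdd.indepNum_eq (n := n) (k := k)
  have hcard : (AuxOdd.Sstar n z).card = indepNum (boxPower (2*n+1) k) + 1 := by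
    rw [hα, AuxOdd.Sstar_card hn z]
  have hmax := AuxOdd.Sstar_maxdeg hn hk z
  have h1mem : 1 ∈ {d | ∃ S : Finset (Fin k → Fin (2*n+1)),
      S.card = indepNum (boxPower (2*n+1) k) + 1 ∧ maxDegOn (boxPower (2*n+1) k) S = d} :=
    ⟨AuxOdd.Sstar n z, hcard, hmax⟩
  unfold minMaxDeg
  apply le_antisymm (Nat.sInf_le h1mem)
  apply le_csInf ⟨1, h1mem⟩
  rintro d ⟨S, hScard, rfl⟩
  have hnotind : ¬ IsIndepFinset (boxPower (2*n+1) k) S := by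
    intro hind
    have hle : S.card ≤ indepNum (boxPower (2*n+1) k) :=
      le_csSup AuxOdd.bddAbove_indep ⟨S, hind, rfl⟩
    omega
  unfold IsIndepFinset at hnotind
  push_neg at hnotind
  obtain ⟨u, hu, v, hv, hadj⟩ := hnotind
  unfold maxDegOn
  refine le_trans ?_ (Finset.le_sup hu)
  exact Finset.card_pos.mpr ⟨v, Finset.mem_filter.mpr ⟨hv, hadj⟩⟩
end

section
/- For every integer k ≥ 1, there exists a set S of vertices of P_3^k with |S| = (3^k + 1)/2 + 1 = α(P_3^k) + 1 such that the induced subgraph P_3^k[S] has maximum degree exactly 2. -/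
open Finset

section Aux
open Finset

variable {n : ℕ}

def esum (u : Fin n → Fin 3) : ℕ := ∑ i, (u i : ℕ)

lemma adj_esum {n : ℕ} {u v : Fin n → Fin 3} (h : (boxPower 3 n).Adj u v) :
    esum u + 1 = esum v ∨ esum v + 1 = esum u := by
  obtain ⟨i, hadj, heq⟩ := h
  have hs : ∀ w : Fin n → Fin 3, esum w = (w i : ℕ) + ∑ j ∈ univ.erase i, (w j : ℕ) := by
    intro w
    rw [esum, ← Finset.add_sum_erase _ _ (mem_univ i)]
  have he : ∑ j ∈ univ.erase i, ((u j : ℕ)) = ∑ j ∈ univ.erase i, (v j : ℕ) :=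
    Finset.sum_congr rfl fun j hj => by rw [heq j (Finset.ne_of_mem_erase hj)]
  rcases hadj with h1 | h1
  · left; rw [hs u, hs v, he]; omega
  · right; rw [hs u, hs v, he]; omega

def flip3 (x : Fin 3) : Fin 3 := if x = 0 then 1 else if x = 1 then 0 else 2

lemma flip3_ne2 : ∀ x : Fin 3, x ≠ 2 → flip3 x ≠ 2 := by decide

lemma flip3_flip3 : ∀ x : Fin 3, x ≠ 2 → flip3 (flip3 x) = x := by decide

lemma flip3_adj : ∀ x : Fin 3, x ≠ 2 →
    ((x : ℕ) + 1 = (flip3 x : ℕ) ∨ (flip3 x : ℕ) + 1 = (x : ℕ)) := by decide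

def nz (u : Fin n → Fin 3) : Finset (Fin n) := univ.filter (fun i => u i ≠ 2)

lemma nz_eq_empty {u : Fin n → Fin 3} : nz u = ∅ ↔ u = fun _ => 2 := by
  simp [nz, Finset.filter_eq_empty_iff, funext_iff]

def mInv (u : Fin n → Fin 3) : Fin n → Fin 3 :=
  if h : (nz u).Nonempty then
    Function.update u ((nz u).min' h) (flip3 (u ((nz u).min' h))) else u

lemma mInv_eq {u : Fin n → Fin 3} (h : (nz u).Nonempty) :
    mInv u = Function.update u ((nz u).min' h) (flip3 (u ((nz u).min' h))) := dif_pos h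

lemma min'_ne2 {u : Fin n → Fin 3} (h : (nz u).Nonempty) : u ((nz u).min' h) ≠ 2 := by
  have := Finset.min'_mem (nz u) h
  simpa [nz] using this

lemma nz_mInv {u : Fin n → Fin 3} (h : (nz u).Nonempty) : nz (mInv u) = nz u := by
  have key : ∀ j, mInv u j ≠ 2 ↔ u j ≠ 2 := by
    intro j
    rw [mInv_eq h]
    rcases eq_or_ne j ((nz u).min' h) with rfl | hj
    · rw [Function.update_self]
      have h2 := min'_ne2 h
      have h3 := flip3_ne2 _ h2
      tauto
    · rw [Function.update_of_ne hj]
  ext j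
  simp only [nz, mem_filter, mem_univ, true_and, key]

lemma mInv_mInv {u : Fin n → Fin 3} (h : (nz u).Nonempty) : mInv (mInv u) = u := by
  have h' : (nz (mInv u)).Nonempty := by rw [nz_mInv h]; exact h
  rw [mInv_eq h']
  simp only [nz_mInv h]
  simp only [mInv_eq h]
  rw [Function.update_self, Function.update_idem,
    flip3_flip3 _ (min'_ne2 h), Function.update_eq_self]

lemma adj_mInv {u : Fin n → Fin 3} (h : (nz u).Nonempty) :
    (boxPower 3 n).Adj u (mInv u) := by
  refine ⟨(nz u).min' h, ?_, ?_⟩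
  · rw [mInv_eq h, Function.update_self]
    exact flip3_adj _ (min'_ne2 h)
  · intro j hj
    rw [mInv_eq h, Function.update_of_ne hj]

lemma parity_mInv {u : Fin n → Fin 3} (h : (nz u).Nonempty) :
    Even (esum (mInv u)) ↔ ¬ Even (esum u) := by
  rcases adj_esum (adj_mInv h) with h1 | h1
  · rw [← h1, Nat.even_add_one]
  · have h2 := Nat.even_add_one (n := esum (mInv u))
    rw [h1] at h2
    tauto

lemma esum_const2 : Even (esum (fun _ : Fin n => (2 : Fin 3))) := by
  simp only [esum]
  simp [Finset.sum_const, mul_comm]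

lemma odd_nonempty {u : Fin n → Fin 3} (h : ¬ Even (esum u)) : (nz u).Nonempty := by
  rw [Finset.nonempty_iff_ne_empty]
  intro hc
  rw [nz_eq_empty] at hc
  subst hc
  exact h esum_const2

def eset (n : ℕ) : Finset (Fin n → Fin 3) := univ.filter (fun u => Even (esum u))

lemma two_mul_card_eset (n : ℕ) : 2 * (eset n).card = 3 ^ n + 1 := by
  classical
  have htot : (eset n).card + (univ.filter (fun u : Fin n → Fin 3 => ¬ Even (esum u))).card
      = 3 ^ n := by
    rw [eset, Finset.card_filter_add_card_filter_not]
    simp [Finset.card_univ]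
  have hmem : (fun _ : Fin n => (2 : Fin 3)) ∈ eset n := by
    simp [eset, esum_const2]
  have hbij : (univ.filter (fun u : Fin n → Fin 3 => ¬ Even (esum u))).card
      = ((eset n).erase (fun _ => 2)).card := by
    apply Finset.card_bij' (fun u _ => mInv u) (fun u _ => mInv u)
    · intro u hu
      simp only [mem_filter, mem_univ, true_and] at hu
      have h := odd_nonempty hu
      refine Finset.mem_erase.mpr ⟨?_, ?_⟩
      · intro hc
        have h0 : nz (mInv u) = ∅ := nz_eq_empty.mpr hc
        rw [nz_mInv h] at h0
        exact Finset.Nonempty.ne_empty h h0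
      · simp only [eset, mem_filter, mem_univ, true_and]
        exact (parity_mInv h).mpr hu
    · intro v hv
      rw [Finset.mem_erase] at hv
      obtain ⟨hne, hv⟩ := hv
      simp only [eset, mem_filter, mem_univ, true_and] at hv
      have h : (nz v).Nonempty := by
        rw [Finset.nonempty_iff_ne_empty]
        intro hc
        exact hne (nz_eq_empty.mp hc)
      simp only [mem_filter, mem_univ, true_and]
      rw [parity_mInv h, not_not]
      exact hv
    · intro u hu
      simp only [mem_filter, mem_univ, true_and] at hu
      exact mInv_mInv (odd_nonempty hu)
    · intro v hv
      rw [Finset.mem_erase] at hv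
      have h : (nz v).Nonempty := by
        rw [Finset.nonempty_iff_ne_empty]
        intro hc
        exact hv.1 (nz_eq_empty.mp hc)
      exact mInv_mInv h
  have herase := Finset.card_erase_of_mem hmem
  have hpos : 0 < (eset n).card := Finset.card_pos.mpr ⟨_, hmem⟩
  omega

lemma eset_indep (n : ℕ) : IsIndepFinset (boxPower 3 n) (eset n) := by
  intro u hu v hv hadj
  simp only [eset, mem_filter, mem_univ, true_and] at hu hv
  rcases adj_esum hadj with h1 | h1
  · rw [← h1, Nat.even_add_one] at hv; exact hv hu
  · rw [← h1, Nat.even_add_one] at hu; exact hu hv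

lemma indep_card_le {n : ℕ} {S : Finset (Fin n → Fin 3)}
    (hS : IsIndepFinset (boxPower 3 n) S) : S.card ≤ (eset n).card := by
  classical
  apply Finset.card_le_card_of_injOn (fun u => if Even (esum u) then u else mInv u)
  · intro u hu
    simp only [eset, mem_filter, mem_univ, true_and]
    by_cases h : Even (esum u)
    · simp [h]
    · rw [if_neg h]
      exact Finset.mem_coe.mpr (Finset.mem_filter.mpr ⟨mem_univ _, (parity_mInv (odd_nonempty h)).mpr h⟩)
  · intro u hu v hv heq
    rw [Finset.mem_coe] at hu hv
    simp only at heq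
    by_cases h1 : Even (esum u) <;> by_cases h2 : Even (esum v)
    · rwa [if_pos h1, if_pos h2] at heq
    · rw [if_pos h1, if_neg h2] at heq
      exact absurd (by rw [heq]; exact adj_mInv (odd_nonempty h2)) (hS v hv u hu)
    · rw [if_neg h1, if_pos h2] at heq
      exact absurd (by rw [← heq]; exact adj_mInv (odd_nonempty h1)) (hS u hu v hv)
    · rw [if_neg h1, if_neg h2] at heq
      have h3 := congrArg mInv heq
      rwa [mInv_mInv (odd_nonempty h1), mInv_mInv (odd_nonempty h2)] at h3

lemma indepNum_eq (n : ℕ) : indepNum (boxPower 3 n) = (eset n).card := by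
  have hgt : IsGreatest {x | ∃ S, IsIndepFinset (boxPower 3 n) S ∧ S.card = x}
      ((eset n).card) := by
    constructor
    · exact ⟨eset n, eset_indep n, rfl⟩
    · rintro x ⟨S, hS, rfl⟩
      exact indep_card_le hS
  rw [indepNum]
  exact hgt.csSup_eq

end Aux

/-- For every `k ≥ 1`, there is a set `S` of vertices of `P_3^k` with
`|S| = (3^k + 1)/2 + 1 = α(P_3^k) + 1` whose induced subgraph has maximum degree
exactly `2`. -/
theorem exists_set_maxDeg_two (k : ℕ) (hk : 1 ≤ k) :
    ∃ S : Finset (Fin k → Fin 3),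
      S.card = (3 ^ k + 1) / 2 + 1 ∧
      S.card = indepNum (boxPower 3 k) + 1 ∧
      maxDegOn (boxPower 3 k) S = 2 := by
  classical
  obtain ⟨m, rfl⟩ : ∃ m, k = m + 1 := ⟨k - 1, by omega⟩
  set S : Finset (Fin (m + 1) → Fin 3) :=
    univ.filter (fun u => Even (∑ i : Fin m, (u i.succ : ℕ))) with hSdef
  have hmemS : ∀ u : Fin (m + 1) → Fin 3,
      u ∈ S ↔ Even (∑ i : Fin m, (u i.succ : ℕ)) := by
    intro u; simp [hSdef]
  -- cardinality of S
  have hcard : S.card = 3 * (eset m).card := by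
    rw [show (3 : ℕ) * (eset m).card = ((univ : Finset (Fin 3)) ×ˢ eset m).card by
      rw [Finset.card_product]; simp]
    refine Finset.card_bij' (fun u _ => (u 0, Fin.tail u)) (fun p _ => Fin.cons p.1 p.2)
      ?hi ?hj ?left ?right
    case hi =>
      intro u hu
      rw [hmemS] at hu
      rw [Finset.mem_product]
      refine ⟨mem_univ _, ?_⟩
      simp only [eset, mem_filter, mem_univ, true_and, esum]
      exact Finset.mem_filter.mpr ⟨mem_univ _, hu⟩
    case hj =>
      intro p hp
      rw [Finset.mem_product] at hp
      have hp2 := hp.2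
      simp only [eset, mem_filter, mem_univ, true_and, esum] at hp2
      rw [hmemS]
      simpa [Fin.cons_succ] using (Finset.mem_filter.mp hp2).2
    case left =>
      intro u _
      exact Fin.cons_self_tail u
    case right =>
      intro p _
      simp [Fin.cons_zero, Fin.tail_cons]
  have h2m := two_mul_card_eset m
  have h2m1 := two_mul_card_eset (m + 1)
  have hpow : (3 : ℕ) ^ (m + 1) = 3 * 3 ^ m := by rw [pow_succ]; ring
  -- key structural fact about adjacency inside S
  have key : ∀ v ∈ S, ∀ u ∈ S, (boxPower 3 (m + 1)).Adj v u →
      ((∀ l : Fin m, u l.succ = v l.succ) ∧ u 0 ≠ v 0) := by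
    intro v hv u hu hadj
    obtain ⟨i, hadj', heq⟩ := hadj
    rcases Fin.eq_zero_or_eq_succ i with rfl | ⟨j, rfl⟩
    · constructor
      · intro l
        exact (heq l.succ (Fin.succ_ne_zero l)).symm
      · intro hh
        rw [hh] at hadj'
        exact (pathGraph' 3).irrefl hadj'
    · exfalso
      -- tails are adjacent, contradicting both even
      have hadjt : (boxPower 3 m).Adj (fun l => v l.succ) (fun l => u l.succ) := by
        refine ⟨j, hadj', ?_⟩
        intro l hl
        exact heq l.succ (fun hc => hl (Fin.succ_injective _ hc))
      rw [hmemS] at hv hu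
      have h1 : Even (esum (fun l : Fin m => v l.succ)) := hv
      have h2 : Even (esum (fun l : Fin m => u l.succ)) := hu
      rcases adj_esum hadjt with h3 | h3
      · rw [← h3, Nat.even_add_one] at h2; exact h2 h1
      · rw [← h3, Nat.even_add_one] at h1; exact h1 h2
  -- degree bound
  have degle : ∀ v ∈ S, (S.filter fun u => (boxPower 3 (m + 1)).Adj v u).card ≤ 2 := by
    intro v hv
    have : (S.filter fun u => (boxPower 3 (m + 1)).Adj v u).card
        ≤ ((univ : Finset (Fin 3)).erase (v 0)).card := by
      apply Finset.card_le_card_of_injOn (fun u => u 0)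
      · intro u hu
        rw [Finset.mem_coe, Finset.mem_filter] at hu
        exact Finset.mem_erase.mpr ⟨(key v hv u hu.1 hu.2).2, mem_univ _⟩
      · intro u hu u' hu' h0
        rw [Finset.mem_coe, Finset.mem_filter] at hu hu'
        have k1 := (key v hv u hu.1 hu.2).1
        have k2 := (key v hv u' hu'.1 hu'.2).1
        funext i
        rcases Fin.eq_zero_or_eq_succ i with rfl | ⟨l, rfl⟩
        · exact h0
        · rw [k1 l, k2 l]
    simpa using this
  -- the witness vertex of degree two
  set v1 : Fin (m + 1) → Fin 3 := Fin.cons 1 (fun _ => 0) with hv1def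
  set a : Fin (m + 1) → Fin 3 := Fin.cons 0 (fun _ => 0) with hadef
  set b : Fin (m + 1) → Fin 3 := Fin.cons 2 (fun _ => 0) with hbdef
  have hv1S : v1 ∈ S := by rw [hmemS]; simp [hv1def, Fin.cons_succ]
  have haS : a ∈ S := by rw [hmemS]; simp [hadef, Fin.cons_succ]
  have hbS : b ∈ S := by rw [hmemS]; simp [hbdef, Fin.cons_succ]
  have hadja : (boxPower 3 (m + 1)).Adj v1 a := by
    refine ⟨0, ?_, ?_⟩
    · right
      simp [hv1def, hadef, Fin.cons_zero]
    · intro j hj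
      obtain ⟨l, rfl⟩ := (Fin.eq_zero_or_eq_succ j).resolve_left hj
      simp [hv1def, hadef, Fin.cons_succ]
  have hadjb : (boxPower 3 (m + 1)).Adj v1 b := by
    refine ⟨0, ?_, ?_⟩
    · left
      simp [hv1def, hbdef, Fin.cons_zero]
    · intro j hj
      obtain ⟨l, rfl⟩ := (Fin.eq_zero_or_eq_succ j).resolve_left hj
      simp [hv1def, hbdef, Fin.cons_succ]
  have hab : a ≠ b := by
    intro hc
    have := congrFun hc 0
    simp [hadef, hbdef, Fin.cons_zero] at this
  have hdeg2 : 2 ≤ (S.filter fun u => (boxPower 3 (m + 1)).Adj v1 u).card := by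
    have hsub : ({a, b} : Finset (Fin (m + 1) → Fin 3))
        ⊆ S.filter fun u => (boxPower 3 (m + 1)).Adj v1 u := by
      intro x hx
      rw [Finset.mem_insert, Finset.mem_singleton] at hx
      rcases hx with rfl | rfl
      · exact Finset.mem_filter.mpr ⟨haS, hadja⟩
      · exact Finset.mem_filter.mpr ⟨hbS, hadjb⟩
    calc 2 = ({a, b} : Finset (Fin (m + 1) → Fin 3)).card := by
              rw [Finset.card_insert_of_notMem (by simpa using hab), Finset.card_singleton]
    _ ≤ _ := Finset.card_le_card hsub
  have hmax : maxDegOn (boxPower 3 (m + 1)) S = 2 := by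
    rw [maxDegOn]
    apply le_antisymm
    · exact Finset.sup_le fun v hv => by
        simpa using degle v hv
    · refine le_trans ?_ (Finset.le_sup hv1S)
      simpa using hdeg2
  refine ⟨S, ?_, ?_, hmax⟩
  · omega
  · rw [indepNum_eq]
    omega
end
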